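/- Let $y \sim \mathrm{Bernoulli}(\rho)$ with $\rho \in (0,1)$ and let $x$ be a random vector whose conditional law given $y=j$ is $G_j$, where $\mathrm{d}G_1 = e^{z^T\beta}\,\mathrm{d}G_0$ with $z=(1,x^T)^T$. Then $\mathrm{cov}\left(\left\{y - \frac{\rho e^{z^T\beta}}{1-\rho+\rho e^{z^T\beta}}\right\} z,\; \frac{y-\rho}{\rho(1-\rho)}\right) = \int \frac{e^{z^T\beta}\, z\,\mathrm{d}G_0}{1-\rho+\rho e^{z^T\beta}}$. -/

import Mathlib

open MeasureTheory Real

/-- `e^{zᵀβ}` with `z = (1, xᵀ)ᵀ`. -/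
noncomputable def tiltFun (d : ℕ) (β : Fin (d + 1) → ℝ) (x : Fin d → ℝ) : ℝ :=
  Real.exp (β 0 + ∑ j, x j * β j.succ)

/-- `z = (1, xᵀ)ᵀ`. -/
def zVec (d : ℕ) (x : Fin d → ℝ) : Fin (d + 1) → ℝ := Fin.cons 1 x

/-- Joint law of `(x, y)`: `y ~ Bernoulli(ρ)` and `x | y = j ~ G_j`, where
`dG₁ = e^{zᵀβ} dG₀`. -/
noncomputable def jointLaw (d : ℕ) (G0 : Measure (Fin d → ℝ)) (β : Fin (d + 1) → ℝ)
    (ρ : ℝ) : Measure ((Fin d → ℝ) × ℝ) :=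
  ENNReal.ofReal ρ •
      (G0.withDensity (fun x => ENNReal.ofReal (tiltFun d β x))).map (fun x => (x, (1 : ℝ)))
    + ENNReal.ofReal (1 - ρ) • G0.map (fun x => (x, (0 : ℝ)))

/-- The logistic residual score: `{y - ρ e^{zᵀβ}/(1-ρ+ρ e^{zᵀβ})} z`. -/
noncomputable def psiScore (d : ℕ) (β : Fin (d + 1) → ℝ) (ρ : ℝ)
    (p : (Fin d → ℝ) × ℝ) (k : Fin (d + 1)) : ℝ :=
  (p.2 - ρ * tiltFun d β p.1 / (1 - ρ + ρ * tiltFun d β p.1)) * zVec d p.1 k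

open scoped NNReal ENNReal

lemma tilt_pos (d : ℕ) (β : Fin (d+1) → ℝ) (x : Fin d → ℝ) : 0 < tiltFun d β x :=
  Real.exp_pos _

lemma measurable_tilt (d : ℕ) (β : Fin (d+1) → ℝ) : Measurable (tiltFun d β) := by
  unfold tiltFun
  exact (measurable_const.add
    (Finset.measurable_sum _ fun j _ => (measurable_pi_apply j).mul measurable_const)).exp

lemma integral_jointLaw (d : ℕ) (G0 : Measure (Fin d → ℝ)) (β : Fin (d+1) → ℝ) (ρ : ℝ)
    (hρ : ρ ∈ Set.Ioo (0:ℝ) 1) (f : (Fin d → ℝ) × ℝ → ℝ)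
    (hf : Integrable f (jointLaw d G0 β ρ)) :
    ∫ p, f p ∂(jointLaw d G0 β ρ)
      = ρ * ∫ x, tiltFun d β x * f (x, 1) ∂G0 + (1 - ρ) * ∫ x, f (x, 0) ∂G0 := by
  have hemb1 : MeasurableEmbedding (fun x : Fin d → ℝ => (x, (1:ℝ))) :=
    measurableEmbedding_prod_mk_right 1
  have hemb0 : MeasurableEmbedding (fun x : Fin d → ℝ => (x, (0:ℝ))) :=
    measurableEmbedding_prod_mk_right 0
  rw [jointLaw] at hf ⊢
  obtain ⟨hf1, hf2⟩ := integrable_add_measure.mp hf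
  rw [integral_add_measure hf1 hf2, integral_smul_measure, integral_smul_measure,
    ENNReal.toReal_ofReal hρ.1.le, ENNReal.toReal_ofReal (by linarith [hρ.2]),
    hemb1.integral_map, hemb0.integral_map, smul_eq_mul, smul_eq_mul]
  congr 2
  rw [show (fun x => ENNReal.ofReal (tiltFun d β x))
      = fun x => ((Real.toNNReal (tiltFun d β x) : ℝ≥0) : ℝ≥0∞) from rfl,
    integral_withDensity_eq_integral_smul ((measurable_tilt d β).real_toNNReal)]
  congr 1; ext x
  simp [NNReal.smul_def, Real.coe_toNNReal _ (tilt_pos d β x).le]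


/-- Covariance computation (Lemma S4): the covariance of the logistic score
`{y - ρe^{zᵀβ}/(1-ρ+ρe^{zᵀβ})} z` with the centered label `(y-ρ)/(ρ(1-ρ))` equals
`∫ e^{zᵀβ} z dG₀/(1-ρ+ρ e^{zᵀβ})`, componentwise. -/
theorem cov_score_label
    (d : ℕ) (G0 : Measure (Fin d → ℝ)) [IsProbabilityMeasure G0]
    (β : Fin (d + 1) → ℝ) (ρ : ℝ) (hρ : ρ ∈ Set.Ioo (0 : ℝ) 1)
    (hint1 : ∀ k, Integrable
      (fun p => psiScore d β ρ p k * ((p.2 - ρ) / (ρ * (1 - ρ)))) (jointLaw d G0 β ρ))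
    (hint2 : ∀ k, Integrable (fun p => psiScore d β ρ p k) (jointLaw d G0 β ρ))
    (hint3 : Integrable (fun p : (Fin d → ℝ) × ℝ => (p.2 - ρ) / (ρ * (1 - ρ)))
      (jointLaw d G0 β ρ))
    (hint4 : ∀ k, Integrable
      (fun x => tiltFun d β x * zVec d x k / (1 - ρ + ρ * tiltFun d β x)) G0) :
    ∀ k : Fin (d + 1),
      (∫ p, psiScore d β ρ p k * ((p.2 - ρ) / (ρ * (1 - ρ))) ∂(jointLaw d G0 β ρ))
        - (∫ p, psiScore d β ρ p k ∂(jointLaw d G0 β ρ))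
          * (∫ p, (p.2 - ρ) / (ρ * (1 - ρ)) ∂(jointLaw d G0 β ρ))
      = ∫ x, tiltFun d β x * zVec d x k / (1 - ρ + ρ * tiltFun d β x) ∂G0 := by
  intro k
  have hρ0 : ρ ≠ 0 := ne_of_gt hρ.1
  have hρ1 : (1:ℝ) - ρ ≠ 0 := by have := hρ.2; intro h; linarith
  have hD : ∀ x, (1 - ρ + ρ * tiltFun d β x) ≠ 0 := fun x => by
    have := tilt_pos d β x
    nlinarith [hρ.1, hρ.2, mul_pos hρ.1 (tilt_pos d β x)]
  -- the two marginal computations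
  have e1 : (∫ p, psiScore d β ρ p k * ((p.2 - ρ) / (ρ * (1 - ρ))) ∂(jointLaw d G0 β ρ))
      = ∫ x, tiltFun d β x * zVec d x k / (1 - ρ + ρ * tiltFun d β x) ∂G0 := by
    rw [integral_jointLaw d G0 β ρ hρ _ (hint1 k)]
    have h1 : (fun x => tiltFun d β x * (psiScore d β ρ (x, 1) k * (((1:ℝ) - ρ) / (ρ * (1 - ρ)))))
        = fun x => ((1 - ρ)/ρ) * (tiltFun d β x * zVec d x k / (1 - ρ + ρ * tiltFun d β x)) := by
      ext x
      have hx := hD x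
      simp only [psiScore]
      field_simp [show 1 - ρ + tiltFun d β x * ρ ≠ 0 by rwa [mul_comm ρ] at hx]
      ring
    have h0 : (fun x => psiScore d β ρ (x, 0) k * (((0:ℝ) - ρ) / (ρ * (1 - ρ))))
        = fun x => (ρ/(1-ρ)) * (tiltFun d β x * zVec d x k / (1 - ρ + ρ * tiltFun d β x)) := by
      ext x
      have hx := hD x
      simp only [psiScore]
      field_simp
      ring
    simp only [h1, h0, integral_const_mul]
    field_simp
    ring
  have e2 : (∫ p, psiScore d β ρ p k ∂(jointLaw d G0 β ρ)) = 0 := by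
    rw [integral_jointLaw d G0 β ρ hρ _ (hint2 k)]
    have h1 : (fun x => tiltFun d β x * psiScore d β ρ (x, 1) k)
        = fun x => (1 - ρ) * (tiltFun d β x * zVec d x k / (1 - ρ + ρ * tiltFun d β x)) := by
      ext x
      have hx := hD x
      simp only [psiScore]
      field_simp [show 1 - ρ + tiltFun d β x * ρ ≠ 0 by rwa [mul_comm ρ] at hx]
      ring
    have h0 : (fun x => psiScore d β ρ (x, 0) k)
        = fun x => (-ρ) * (tiltFun d β x * zVec d x k / (1 - ρ + ρ * tiltFun d β x)) := by
      ext x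
      have hx := hD x
      simp only [psiScore]
      field_simp
      ring
    simp only [h1, h0, integral_const_mul]
    ring
  rw [e1, e2]
  ring
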